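/- For every positive integer k, m(k, 3) = 3k; that is, the smallest number of vertices of a simple graph containing at least 3 distinct k-dominating independent sets is exactly 3k. -/

import Mathlib

open SimpleGraph

/-- `D` is a `k`-dominating independent set of `G`: `D` is independent and every vertex
outside `D` has at least `k` neighbours in `D`. -/
def IsKDIS {V : Type*} [Fintype V] (G : SimpleGraph V) (k : ℕ) (D : Finset V) : Prop :=
  (∀ x ∈ D, ∀ y ∈ D, ¬ G.Adj x y) ∧
  ∀ v : V, v ∉ D → k ≤ (G.neighborSet v ∩ (D : Set V)).ncard

/-- The number of `k`-dominating independent sets of `G`. -/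
noncomputable def numKDIS {V : Type*} [Fintype V] (G : SimpleGraph V) (k : ℕ) : ℕ :=
  Nat.card {D : Finset V // IsKDIS G k D}

/-- `mi k n`: the maximum number of `k`-dominating independent sets in a simple graph
on `n` vertices. -/
noncomputable def mi (k n : ℕ) : ℕ :=
  sSup {m : ℕ | ∃ G : SimpleGraph (Fin n), numKDIS G k = m}

/-- `mDIS k t`: the smallest `n` such that some simple graph on `n` vertices has at least
`t` `k`-dominating independent sets. -/
noncomputable def mDIS (k t : ℕ) : ℕ :=
  sInf {n : ℕ | ∃ G : SimpleGraph (Fin n), t ≤ numKDIS G k}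

section Aux

open Finset

variable {V : Type*} [Fintype V] [DecidableEq V] {G : SimpleGraph V} [DecidableRel G.Adj] {k : ℕ}

lemma ncard_eq_filter (v : V) (D : Finset V) :
    (G.neighborSet v ∩ (D : Set V)).ncard = (D.filter (fun u => G.Adj v u)).card := by
  rw [← Set.ncard_coe_finset]
  congr 1
  ext u
  simp [mem_neighborSet, and_comm]

lemma sdiff_nonempty_of_ne (hk : 1 ≤ k) {D D' : Finset V}
    (hD : IsKDIS G k D) (hD' : IsKDIS G k D') (hne : D ≠ D') : (D \ D').Nonempty := by
  rw [Finset.sdiff_nonempty]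
  intro hsub
  obtain ⟨w, hw', hw⟩ := Finset.exists_of_ssubset (hsub.ssubset_of_ne hne)
  have h1 := hD.2 w hw
  rw [ncard_eq_filter] at h1
  have h2 : D.filter (fun u => G.Adj w u) = ∅ := by
    rw [Finset.filter_eq_empty_iff]
    intro u hu
    exact hD'.1 w hw' u (hsub hu)
  rw [h2] at h1
  simp at h1
  omega

lemma k_le_sdiff_card {D D' : Finset V} (hD : IsKDIS G k D) (hD' : IsKDIS G k D')
    (hne : (D \ D').Nonempty) : k ≤ (D' \ D).card := by
  obtain ⟨v, hv⟩ := hne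
  rw [Finset.mem_sdiff] at hv
  have h1 := hD'.2 v hv.2
  rw [ncard_eq_filter] at h1
  refine h1.trans (Finset.card_le_card ?_)
  intro u hu
  rw [Finset.mem_filter] at hu
  rw [Finset.mem_sdiff]
  refine ⟨hu.1, fun huD => ?_⟩
  exact hD.1 v hv.1 u huD hu.2

lemma lower_bound (hk : 1 ≤ k) {D1 D2 D3 : Finset V}
    (h1 : IsKDIS G k D1) (h2 : IsKDIS G k D2) (h3 : IsKDIS G k D3)
    (h12 : D1 ≠ D2) (h13 : D1 ≠ D3) (h23 : D2 ≠ D3) :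
    3 * k ≤ Fintype.card V := by
  have a12 : k ≤ (D1 \ D2).card :=
    k_le_sdiff_card h2 h1 (sdiff_nonempty_of_ne hk h2 h1 h12.symm)
  have a23 : k ≤ (D2 \ D3).card :=
    k_le_sdiff_card h3 h2 (sdiff_nonempty_of_ne hk h3 h2 h23.symm)
  have a31 : k ≤ (D3 \ D1).card :=
    k_le_sdiff_card h1 h3 (sdiff_nonempty_of_ne hk h1 h3 h13)
  have d1 : Disjoint (D1 \ D2) (D2 \ D3) := by
    rw [Finset.disjoint_left]; intro a ha hb
    exact (Finset.mem_sdiff.mp ha).2 (Finset.mem_sdiff.mp hb).1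
  have d2 : Disjoint (D1 \ D2 ∪ D2 \ D3) (D3 \ D1) := by
    rw [Finset.disjoint_left]; intro a ha hb
    rcases Finset.mem_union.mp ha with h | h
    · exact (Finset.mem_sdiff.mp hb).2 (Finset.mem_sdiff.mp h).1
    · exact (Finset.mem_sdiff.mp h).2 (Finset.mem_sdiff.mp hb).1
  calc 3 * k ≤ (D1 \ D2).card + (D2 \ D3).card + (D3 \ D1).card := by omega
    _ = (D1 \ D2 ∪ D2 \ D3 ∪ D3 \ D1).card := by
        rw [Finset.card_union_of_disjoint d2, Finset.card_union_of_disjoint d1]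
    _ ≤ Fintype.card V := Finset.card_le_univ _

end Aux

/-- The complete 3-partite graph on `Fin (3*k)` with parts given by `x / k`. -/
def triG (k : ℕ) : SimpleGraph (Fin (3 * k)) where
  Adj x y := x.val / k ≠ y.val / k
  symm := ⟨fun x y h => Ne.symm h⟩
  loopless := ⟨fun x h => h rfl⟩

instance (k : ℕ) : DecidableRel (triG k).Adj := fun x y => by
  unfold triG; infer_instance

/-- The parts of the tripartite graph. -/
def triP (k i : ℕ) : Finset (Fin (3 * k)) :=
  Finset.univ.filter (fun x => x.val / k = i)

lemma mem_triP {k i : ℕ} {x : Fin (3 * k)} : x ∈ triP k i ↔ x.val / k = i := by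
  simp [triP]

lemma triP_isKDIS (k : ℕ) (hk : 1 ≤ k) (i : ℕ) (hi : i < 3) :
    IsKDIS (triG k) k (triP k i) := by
  constructor
  · intro x hx y hy hadj
    rw [mem_triP] at hx hy
    exact hadj (hx.trans hy.symm)
  · intro v hv
    rw [mem_triP] at hv
    rw [ncard_eq_filter]
    have hfeq : (triP k i).filter (fun u => (triG k).Adj v u) = triP k i := by
      rw [Finset.filter_eq_self]
      intro u hu
      rw [mem_triP] at hu
      show v.val / k ≠ u.val / k
      rw [hu]; exact hv
    rw [hfeq]
    have : (Finset.univ : Finset (Fin k)).card ≤ (triP k i).card := by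
      apply Finset.card_le_card_of_injOn (fun j : Fin k => (⟨i * k + j.val, by
        have h2 : i * k ≤ 2 * k := Nat.mul_le_mul_right k (by omega)
        have h3 := j.isLt
        omega⟩ : Fin (3 * k)))
      · intro j _
        rw [Finset.mem_coe, mem_triP]
        show (i * k + j.val) / k = i
        rw [mul_comm, Nat.mul_add_div (by omega), Nat.div_eq_of_lt j.isLt]; omega
      · intro a _ b _ hab
        have : i * k + a.val = i * k + b.val := congrArg Fin.val hab
        exact Fin.ext (by omega)
    simpa using this

lemma triP_div (k i : ℕ) (hk : 1 ≤ k) (hi : i < 3) : (i * k) / k = i :=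
  Nat.mul_div_cancel i (by omega) -- check name

lemma triP_ne (k : ℕ) (hk : 1 ≤ k) {i j : ℕ} (hi : i < 3) (hj : j < 3) (hij : i ≠ j) :
    triP k i ≠ triP k j := by
  intro h
  have hx : (⟨i * k, by
      have h2 : i * k ≤ 2 * k := Nat.mul_le_mul_right k (by omega)
      omega⟩ : Fin (3 * k)) ∈ triP k i := by
    rw [mem_triP]; exact Nat.mul_div_cancel i (by omega)
  rw [h, mem_triP] at hx
  simp only at hx
  rw [Nat.mul_div_cancel i (by omega)] at hx
  exact hij hx

theorem mDIS_three (k : ℕ) (hk : 1 ≤ k) : mDIS k 3 = 3 * k := by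
  classical
  have hmem : 3 * k ∈ {n : ℕ | ∃ G : SimpleGraph (Fin n), 3 ≤ numKDIS G k} := by
    refine ⟨triG k, ?_⟩
    unfold numKDIS
    have : Fintype {D : Finset (Fin (3 * k)) // IsKDIS (triG k) k D} := by infer_instance
    rw [Nat.card_eq_fintype_card]
    apply Fintype.two_lt_card_iff.mpr
    refine ⟨⟨triP k 0, triP_isKDIS k hk 0 (by omega)⟩,
           ⟨triP k 1, triP_isKDIS k hk 1 (by omega)⟩,
           ⟨triP k 2, triP_isKDIS k hk 2 (by omega)⟩, ?_, ?_, ?_⟩ <;>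
      simp only [ne_eq, Subtype.mk.injEq]
    · exact triP_ne k hk (by omega) (by omega) (by omega)
    · exact triP_ne k hk (by omega) (by omega) (by omega)
    · exact triP_ne k hk (by omega) (by omega) (by omega)
  refine le_antisymm (Nat.sInf_le hmem) (le_csInf ⟨_, hmem⟩ ?_)
  rintro n ⟨G, hG⟩
  have : DecidableRel G.Adj := Classical.decRel _
  unfold numKDIS at hG
  have hft : Fintype {D : Finset (Fin n) // IsKDIS G k D} := by
    classical infer_instance
  rw [Nat.card_eq_fintype_card] at hG
  obtain ⟨⟨D1, h1⟩, ⟨D2, h2⟩, ⟨D3, h3⟩, h12, h13, h23⟩ := Fintype.two_lt_card_iff.mp hG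
  simp only [ne_eq, Subtype.mk.injEq] at h12 h13 h23
  have := lower_bound hk h1 h2 h3 h12 h13 h23
  simpa using this
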